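/- Let n, m ≥ 4, let X be an m×n random matrix whose entries are independent standard normal N(0,1) random variables, and set W = XXᵀ. Fix 1 ≤ i < j < k < l ≤ m. Then Var(det W_{{i,j},{k,l}}) = Var(det W_{{i,k},{j,l}}) = Var(det W_{{i,l},{j,k}}) = 2n(n−1), Cov(det W_{{i,j},{k,l}}, det W_{{i,k},{j,l}}) = n(n−1), Cov(det W_{{i,j},{k,l}}, det W_{{i,l},{j,k}}) = −n(n−1), and Cov(det W_{{i,k},{j,l}}, det W_{{i,l},{j,k}}) = n(n−1). -/

import Mathlib

open MeasureTheory ProbabilityTheory Matrix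

/-- The joint law of the entries of an `m × n` random matrix with independent standard
normal `N(0,1)` entries: the product of `n*m` copies of the standard Gaussian measure. -/
noncomputable def stdGaussianMatrixMeasure (m n : ℕ) :
    MeasureTheory.Measure ((Fin m × Fin n) → ℝ) :=
  MeasureTheory.Measure.pi fun _ => ProbabilityTheory.gaussianReal 0 1

/-- `det M_{I,J}` for `I = {a,b}` and `J = {c,d}`: the determinant of the `2 × 2`
submatrix of `M` with rows `{a,b}` and columns `{c,d}`, indices taken in increasing
order. -/
def sminor {m : ℕ} (M : Matrix (Fin m) (Fin m) ℝ) (a b c d : Fin m) : ℝ :=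
  M (min a b) (min c d) * M (max a b) (max c d) -
    M (min a b) (max c d) * M (max a b) (min c d)

/-- The covariance of two real random variables with respect to a measure `μ`. -/
noncomputable def covar {Ω : Type*} [MeasurableSpace Ω] (μ : MeasureTheory.Measure Ω)
    (f g : Ω → ℝ) : ℝ :=
  ∫ ω, (f ω - ∫ x, f x ∂μ) * (g ω - ∫ x, g x ∂μ) ∂μ


section WishartAux

open Real
open scoped ENNReal NNReal

noncomputable def gm (e : ℕ) : ℝ := ∫ x, x ^ e ∂(ProbabilityTheory.gaussianReal 0 1)

lemma gaussianReal01_eq : gaussianReal 0 1 =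
    (volume : Measure ℝ).withDensity (fun x => ((gaussianPDFReal 0 1 x).toNNReal : ℝ≥0∞)) := by
  rw [gaussianReal_of_var_ne_zero 0 one_ne_zero]
  rfl

lemma pdf01 (x : ℝ) : gaussianPDFReal 0 1 x = (Real.sqrt (2 * π))⁻¹ * Real.exp (-(1/2) * x ^ 2) := by
  unfold gaussianPDFReal
  norm_num
  left
  congr 1
  ring

lemma gaussian_integral_transfer (g : ℝ → ℝ) :
    ∫ x, g x ∂(gaussianReal 0 1) = ∫ x, gaussianPDFReal 0 1 x * g x := by
  rw [gaussianReal01_eq, integral_withDensity_eq_integral_smul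
    ((measurable_gaussianPDFReal 0 1).real_toNNReal) g]
  congr 1
  ext x
  simp [NNReal.smul_def, Real.coe_toNNReal _ (gaussianPDFReal_nonneg 0 1 x)]

lemma gaussian_integrable_iff (g : ℝ → ℝ) :
    Integrable g (gaussianReal 0 1) ↔ Integrable (fun x => g x * gaussianPDFReal 0 1 x) volume := by
  rw [gaussianReal01_eq]
  rw [integrable_withDensity_iff_integrable_smul ((measurable_gaussianPDFReal 0 1).real_toNNReal)]
  constructor <;> intro h <;> refine h.congr (Filter.Eventually.of_forall fun x => ?_) <;>
    simp [NNReal.smul_def, Real.coe_toNNReal _ (gaussianPDFReal_nonneg 0 1 x), mul_comm]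


lemma integrable_pow_pdf (e : ℕ) (he : e ≤ 2) :
    Integrable (fun x : ℝ => x ^ e * gaussianPDFReal 0 1 x) volume := by
  have hb : (0:ℝ) < 1/2 := by norm_num
  have key : Integrable (fun x : ℝ => x ^ e * Real.exp (-(1/2) * x ^ 2)) volume := by
    interval_cases e
    · simpa using integrable_exp_neg_mul_sq hb
    · simpa [pow_one] using integrable_mul_exp_neg_mul_sq hb
    · -- x^2 * exp(-(1/2) x^2) ≤ 4 * exp(-(1/4) x^2)
      have h4 : (0:ℝ) < 1/4 := by norm_num
      refine Integrable.mono' ((integrable_exp_neg_mul_sq h4).const_mul 4)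
        (Continuous.aestronglyMeasurable (by continuity))
        (Filter.Eventually.of_forall fun x => ?_)
      have hx : x ^ 2 * Real.exp (-(1/4) * x ^ 2) ≤ 4 := by
        have h := Real.add_one_le_exp ((1/4) * x ^ 2)
        have h2 : (1/4) * x ^ 2 ≤ Real.exp ((1/4) * x ^ 2) := by nlinarith [sq_nonneg x]
        have h3 : Real.exp (-(1/4) * x ^ 2) = (Real.exp ((1/4) * x ^ 2))⁻¹ := by
          rw [← Real.exp_neg]; ring_nf
        rw [h3]
        rw [mul_inv_le_iff₀ (Real.exp_pos _)]
        nlinarith [Real.exp_pos ((1/4) * x^2), sq_nonneg x]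
      have : x ^ 2 * Real.exp (-(1/2) * x ^ 2) ≤ 4 * Real.exp (-(1/4) * x ^ 2) := by
        have : Real.exp (-(1/2) * x ^ 2) = Real.exp (-(1/4) * x ^ 2) * Real.exp (-(1/4) * x ^ 2) := by
          rw [← Real.exp_add]; ring_nf
        rw [this, ← mul_assoc]
        have := mul_le_mul_of_nonneg_right hx (Real.exp_nonneg (-(1/4) * x ^ 2))
        linarith [this]
      have hnn : 0 ≤ x ^ 2 * Real.exp (-(1/2) * x ^ 2) := by positivity
      simpa [abs_of_nonneg hnn] using this
  have := (key.const_mul ((Real.sqrt (2 * π))⁻¹))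
  refine this.congr (Filter.Eventually.of_forall fun x => ?_)
  simp only [pdf01]
  ring

lemma integrable_pow_gaussian (e : ℕ) (he : e ≤ 2) :
    Integrable (fun x : ℝ => x ^ e) (gaussianReal 0 1) := by
  rw [gaussian_integrable_iff]
  exact integrable_pow_pdf e he


lemma gm_zero : gm 0 = 1 := by
  simp [gm]

lemma gm_one : gm 1 = 0 := by
  rw [gm, gaussian_integral_transfer]
  have hodd : ∀ x : ℝ, gaussianPDFReal 0 1 (-x) * (-x) ^ 1 = -(gaussianPDFReal 0 1 x * x ^ 1) := by
    intro x
    simp only [pdf01]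
    ring_nf
  have hI : (∫ x, gaussianPDFReal 0 1 x * x ^ 1) = -∫ x, gaussianPDFReal 0 1 x * x ^ 1 := by
    calc ∫ x, gaussianPDFReal 0 1 x * x ^ 1
        = ∫ x, gaussianPDFReal 0 1 (-x) * (-x) ^ 1 := (integral_neg_eq_self _ _).symm
      _ = ∫ x, -(gaussianPDFReal 0 1 x * x ^ 1) := by simp only [hodd]
      _ = -∫ x, gaussianPDFReal 0 1 x * x ^ 1 := integral_neg _
  linarith


lemma gm_two : gm 2 = 1 := by
  rw [gm, gaussian_integral_transfer]
  have step1 : (∫ x : ℝ, gaussianPDFReal 0 1 x * x ^ 2)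
      = (Real.sqrt (2 * π))⁻¹ * ∫ x : ℝ, x ^ 2 * Real.exp (-(1/2) * x ^ 2) := by
    rw [← integral_const_mul]
    congr 1
    funext x
    rw [pdf01]
    ring
  rw [step1]
  have step2 : (∫ x : ℝ, x ^ 2 * Real.exp (-(1/2) * x ^ 2))
      = 2 * ∫ x in Set.Ioi (0:ℝ), x ^ 2 * Real.exp (-(1/2) * x ^ 2) := by
    rw [← integral_comp_abs (f := fun x => x ^ 2 * Real.exp (-(1/2) * x ^ 2))]
    congr 1
    funext x
    rw [sq_abs]
  rw [step2]
  have step3 : (∫ x in Set.Ioi (0:ℝ), x ^ 2 * Real.exp (-(1/2) * x ^ 2))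
      = (1/2 : ℝ) ^ (-(((2:ℝ) + 1)) / 2) * (1 / 2) * Real.Gamma (((2:ℝ) + 1) / 2) := by
    rw [← integral_rpow_mul_exp_neg_mul_rpow (by norm_num) (by norm_num : (-1:ℝ) < 2) (by norm_num : (0:ℝ) < 1/2)]
    refine setIntegral_congr_fun measurableSet_Ioi fun x hx => ?_
    have h1 : x ^ (2:ℝ) = x ^ (2:ℕ) := by
      rw [← Real.rpow_natCast x 2]; norm_num
    rw [h1]
  rw [step3]
  have hgamma : Real.Gamma (((2:ℝ) + 1) / 2) = Real.sqrt π / 2 := by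
    have : ((2:ℝ) + 1) / 2 = 1/2 + 1 := by norm_num
    rw [this, Real.Gamma_add_one (by norm_num), Real.Gamma_one_half_eq]
    ring
  rw [hgamma]
  have hpow : ((1:ℝ)/2) ^ (-(((2:ℝ) + 1)) / 2) = 2 * Real.sqrt 2 := by
    rw [one_div, ← Real.rpow_neg_one (2:ℝ), ← Real.rpow_mul (by norm_num : (0:ℝ) ≤ 2)]
    have : (-1 : ℝ) * (-((2:ℝ) + 1) / 2) = 1 + 1/2 := by norm_num
    rw [this, Real.rpow_add (by norm_num : (0:ℝ) < 2), Real.rpow_one, ← Real.sqrt_eq_rpow]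
  rw [hpow]
  have hsplit : Real.sqrt (2 * π) = Real.sqrt 2 * Real.sqrt π := Real.sqrt_mul (by norm_num) π
  rw [hsplit]
  have h2 : (0:ℝ) < Real.sqrt 2 := Real.sqrt_pos.mpr (by norm_num)
  have hp : (0:ℝ) < Real.sqrt π := Real.sqrt_pos.mpr Real.pi_pos
  field_simp



lemma pi_integral {ι : Type*} [Fintype ι] (f : ι → ℝ → ℝ) :
    ∫ ω : ι → ℝ, ∏ q, f q (ω q) ∂(Measure.pi fun _ => gaussianReal 0 1)
      = ∏ q, ∫ x, f q x ∂(gaussianReal 0 1) := by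
  letI : MeasureSpace ℝ := ⟨gaussianReal 0 1⟩
  haveI : IsProbabilityMeasure (volume : Measure ℝ) :=
    (inferInstance : IsProbabilityMeasure (gaussianReal 0 1))
  haveI : SigmaFinite (volume : Measure ℝ) := inferInstance
  exact integral_fintype_prod_eq_prod f

lemma pi_integrable {ι : Type*} [Fintype ι] (f : ι → ℝ → ℝ)
    (hf : ∀ q, Integrable (f q) (gaussianReal 0 1)) :
    Integrable (fun ω : ι → ℝ => ∏ q, f q (ω q)) (Measure.pi fun _ => gaussianReal 0 1) := by
  letI : MeasureSpace ℝ := ⟨gaussianReal 0 1⟩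
  haveI : IsProbabilityMeasure (volume : Measure ℝ) :=
    (inferInstance : IsProbabilityMeasure (gaussianReal 0 1))
  haveI : SigmaFinite (volume : Measure ℝ) := inferInstance
  exact Integrable.fintype_prod hf


/-- product over a fintype of a function supported on four distinct points -/
lemma prod_four {α : Type*} [Fintype α] [DecidableEq α] {r1 r2 r3 r4 : α}
    (h12 : r1 ≠ r2) (h13 : r1 ≠ r3) (h14 : r1 ≠ r4) (h23 : r2 ≠ r3) (h24 : r2 ≠ r4)
    (h34 : r3 ≠ r4) (G : α → ℝ) (hG : ∀ r, r ≠ r1 → r ≠ r2 → r ≠ r3 → r ≠ r4 → G r = 1) :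
    ∏ r, G r = G r1 * G r2 * G r3 * G r4 := by
  have hsub : ({r1, r2, r3, r4} : Finset α) ⊆ Finset.univ := Finset.subset_univ _
  rw [← Finset.prod_subset hsub (fun x _ hx => by
    simp only [Finset.mem_insert, Finset.mem_singleton, not_or] at hx
    exact hG x hx.1 hx.2.1 hx.2.2.1 hx.2.2.2)]
  rw [Finset.prod_insert (by simp [h12, h13, h14]),
      Finset.prod_insert (by simp [h23, h24]),
      Finset.prod_insert (by simp [h34]), Finset.prod_singleton]
  ring

def cnt {n : ℕ} (c a b : Fin n) : ℕ := (if c = a then 1 else 0) + (if c = b then 1 else 0)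

lemma cnt_le {n : ℕ} (c a b : Fin n) : cnt c a b ≤ 2 := by
  unfold cnt; split_ifs <;> omega

lemma prod_pow_pair {n : ℕ} (x : Fin n → ℝ) (a b : Fin n) :
    ∏ c, x c ^ cnt c a b = x a * x b := by
  unfold cnt
  simp only [pow_add]
  rw [Finset.prod_mul_distrib]
  congr 1 <;>
  · simp only [pow_ite, pow_one, pow_zero]
    simp
lemma rowfactor {n : ℕ} (a b : Fin n) :
    ∏ c, gm (cnt c a b) = if a = b then (1:ℝ) else 0 := by
  by_cases hab : a = b
  · subst hab
    rw [if_pos rfl]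
    refine Finset.prod_eq_one fun c _ => ?_
    unfold cnt
    split_ifs <;> simp [gm_zero, gm_two]
  · rw [if_neg hab]
    refine Finset.prod_eq_zero (Finset.mem_univ a) ?_
    unfold cnt
    rw [if_pos rfl, if_neg hab]
    simpa using gm_one

section key
variable {m n : ℕ}

noncomputable abbrev gpi (m n : ℕ) : Measure ((Fin m × Fin n) → ℝ) :=
  Measure.pi fun _ => gaussianReal 0 1

def F8 (r1 r2 r3 r4 : Fin m) (c1 c1' c2 c2' c3 c3' c4 c4' : Fin n) :
    Fin m × Fin n → ℕ := fun q =>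
  if q.1 = r1 then cnt q.2 c1 c1' else if q.1 = r2 then cnt q.2 c2 c2' else
  if q.1 = r3 then cnt q.2 c3 c3' else if q.1 = r4 then cnt q.2 c4 c4' else 0

lemma F8_le (r1 r2 r3 r4 : Fin m) (c1 c1' c2 c2' c3 c3' c4 c4' : Fin n) (q) :
    F8 r1 r2 r3 r4 c1 c1' c2 c2' c3 c3' c4 c4' q ≤ 2 := by
  unfold F8
  split_ifs <;> first | exact cnt_le _ _ _ | omega

lemma repr8 (r1 r2 r3 r4 : Fin m)
    (h12 : r1 ≠ r2) (h13 : r1 ≠ r3) (h14 : r1 ≠ r4) (h23 : r2 ≠ r3) (h24 : r2 ≠ r4)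
    (h34 : r3 ≠ r4) (c1 c1' c2 c2' c3 c3' c4 c4' : Fin n) (ω : (Fin m × Fin n) → ℝ) :
    (ω (r1,c1) * ω (r1,c1')) * (ω (r2,c2) * ω (r2,c2')) * (ω (r3,c3) * ω (r3,c3'))
        * (ω (r4,c4) * ω (r4,c4'))
      = ∏ q, (ω q) ^ (F8 r1 r2 r3 r4 c1 c1' c2 c2' c3 c3' c4 c4' q) := by
  rw [Fintype.prod_prod_type]
  rw [prod_four h12 h13 h14 h23 h24 h34
    (G := fun r => ∏ c, ω (r, c) ^ (F8 r1 r2 r3 r4 c1 c1' c2 c2' c3 c3' c4 c4' (r, c)))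
    (fun r hr1 hr2 hr3 hr4 => by
      refine Finset.prod_eq_one fun c _ => ?_
      simp [F8, hr1, hr2, hr3, hr4])]
  have e1 : ∀ c, F8 r1 r2 r3 r4 c1 c1' c2 c2' c3 c3' c4 c4' (r1,c) = cnt c c1 c1' :=
    fun c => by simp [F8]
  have e2 : ∀ c, F8 r1 r2 r3 r4 c1 c1' c2 c2' c3 c3' c4 c4' (r2,c) = cnt c c2 c2' :=
    fun c => by simp [F8, h12.symm]
  have e3 : ∀ c, F8 r1 r2 r3 r4 c1 c1' c2 c2' c3 c3' c4 c4' (r3,c) = cnt c c3 c3' :=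
    fun c => by simp [F8, h13.symm, h23.symm]
  have e4 : ∀ c, F8 r1 r2 r3 r4 c1 c1' c2 c2' c3 c3' c4 c4' (r4,c) = cnt c c4 c4' :=
    fun c => by simp [F8, h14.symm, h24.symm, h34.symm]
  simp only [e1, e2, e3, e4, prod_pow_pair]

lemma key8_int (r1 r2 r3 r4 : Fin m)
    (h12 : r1 ≠ r2) (h13 : r1 ≠ r3) (h14 : r1 ≠ r4) (h23 : r2 ≠ r3) (h24 : r2 ≠ r4)
    (h34 : r3 ≠ r4) (c1 c1' c2 c2' c3 c3' c4 c4' : Fin n) :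
    Integrable (fun ω : (Fin m × Fin n) → ℝ =>
      (ω (r1,c1) * ω (r1,c1')) * (ω (r2,c2) * ω (r2,c2')) * (ω (r3,c3) * ω (r3,c3'))
        * (ω (r4,c4) * ω (r4,c4'))) (gpi m n) := by
  have := pi_integrable (fun q (x : ℝ) => x ^ (F8 r1 r2 r3 r4 c1 c1' c2 c2' c3 c3' c4 c4' q))
    (fun q => integrable_pow_gaussian _ (F8_le _ _ _ _ _ _ _ _ _ _ _ _ q))
  exact this.congr (Filter.Eventually.of_forall fun ω =>
    (repr8 r1 r2 r3 r4 h12 h13 h14 h23 h24 h34 c1 c1' c2 c2' c3 c3' c4 c4' ω).symm)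

lemma key8_val (r1 r2 r3 r4 : Fin m)
    (h12 : r1 ≠ r2) (h13 : r1 ≠ r3) (h14 : r1 ≠ r4) (h23 : r2 ≠ r3) (h24 : r2 ≠ r4)
    (h34 : r3 ≠ r4) (c1 c1' c2 c2' c3 c3' c4 c4' : Fin n) :
    ∫ ω : (Fin m × Fin n) → ℝ,
      (ω (r1,c1) * ω (r1,c1')) * (ω (r2,c2) * ω (r2,c2')) * (ω (r3,c3) * ω (r3,c3'))
        * (ω (r4,c4) * ω (r4,c4')) ∂(gpi m n)
      = (if c1 = c1' then (1:ℝ) else 0) * (if c2 = c2' then 1 else 0)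
        * (if c3 = c3' then 1 else 0) * (if c4 = c4' then 1 else 0) := by
  have hre : ∀ ω : (Fin m × Fin n) → ℝ,
      (ω (r1,c1) * ω (r1,c1')) * (ω (r2,c2) * ω (r2,c2')) * (ω (r3,c3) * ω (r3,c3'))
        * (ω (r4,c4) * ω (r4,c4'))
      = ∏ q, (ω q) ^ (F8 r1 r2 r3 r4 c1 c1' c2 c2' c3 c3' c4 c4' q) :=
    repr8 r1 r2 r3 r4 h12 h13 h14 h23 h24 h34 c1 c1' c2 c2' c3 c3' c4 c4'
  simp only [hre]
  rw [pi_integral (fun q (x : ℝ) => x ^ (F8 r1 r2 r3 r4 c1 c1' c2 c2' c3 c3' c4 c4' q))]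
  have : ∀ q, (∫ x : ℝ, x ^ (F8 r1 r2 r3 r4 c1 c1' c2 c2' c3 c3' c4 c4' q) ∂(gaussianReal 0 1))
      = gm (F8 r1 r2 r3 r4 c1 c1' c2 c2' c3 c3' c4 c4' q) := fun q => rfl
  simp only [this]
  rw [Fintype.prod_prod_type]
  rw [prod_four h12 h13 h14 h23 h24 h34
    (G := fun r => ∏ c, gm (F8 r1 r2 r3 r4 c1 c1' c2 c2' c3 c3' c4 c4' (r, c)))
    (fun r hr1 hr2 hr3 hr4 => by
      refine Finset.prod_eq_one fun c _ => ?_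
      simp [F8, hr1, hr2, hr3, hr4, gm_zero])]
  have e1 : ∀ c, F8 r1 r2 r3 r4 c1 c1' c2 c2' c3 c3' c4 c4' (r1,c) = cnt c c1 c1' :=
    fun c => by simp [F8]
  have e2 : ∀ c, F8 r1 r2 r3 r4 c1 c1' c2 c2' c3 c3' c4 c4' (r2,c) = cnt c c2 c2' :=
    fun c => by simp [F8, h12.symm]
  have e3 : ∀ c, F8 r1 r2 r3 r4 c1 c1' c2 c2' c3 c3' c4 c4' (r3,c) = cnt c c3 c3' :=
    fun c => by simp [F8, h13.symm, h23.symm]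
  have e4 : ∀ c, F8 r1 r2 r3 r4 c1 c1' c2 c2' c3 c3' c4 c4' (r4,c) = cnt c c4 c4' :=
    fun c => by simp [F8, h14.symm, h24.symm, h34.symm]
  simp only [e1, e2, e3, e4, rowfactor]

def cnt1 {n : ℕ} (c a : Fin n) : ℕ := if c = a then 1 else 0

lemma prod_pow_single {n : ℕ} (x : Fin n → ℝ) (a : Fin n) :
    ∏ c, x c ^ cnt1 c a = x a := by
  unfold cnt1
  simp only [pow_ite, pow_one, pow_zero]
  simp

lemma rowfactor1 {n : ℕ} (a : Fin n) : ∏ c, gm (cnt1 c a) = 0 := by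
  refine Finset.prod_eq_zero (Finset.mem_univ a) ?_
  unfold cnt1
  rw [if_pos rfl]
  exact gm_one

def F4 (r1 r2 r3 r4 : Fin m) (c1 c2 c3 c4 : Fin n) : Fin m × Fin n → ℕ := fun q =>
  if q.1 = r1 then cnt1 q.2 c1 else if q.1 = r2 then cnt1 q.2 c2 else
  if q.1 = r3 then cnt1 q.2 c3 else if q.1 = r4 then cnt1 q.2 c4 else 0

lemma F4_le (r1 r2 r3 r4 : Fin m) (c1 c2 c3 c4 : Fin n) (q) :
    F4 r1 r2 r3 r4 c1 c2 c3 c4 q ≤ 2 := by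
  unfold F4 cnt1
  split_ifs <;> omega

lemma repr4 (r1 r2 r3 r4 : Fin m)
    (h12 : r1 ≠ r2) (h13 : r1 ≠ r3) (h14 : r1 ≠ r4) (h23 : r2 ≠ r3) (h24 : r2 ≠ r4)
    (h34 : r3 ≠ r4) (c1 c2 c3 c4 : Fin n) (ω : (Fin m × Fin n) → ℝ) :
    ω (r1,c1) * ω (r2,c2) * ω (r3,c3) * ω (r4,c4)
      = ∏ q, (ω q) ^ (F4 r1 r2 r3 r4 c1 c2 c3 c4 q) := by
  rw [Fintype.prod_prod_type]
  rw [prod_four h12 h13 h14 h23 h24 h34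
    (G := fun r => ∏ c, ω (r, c) ^ (F4 r1 r2 r3 r4 c1 c2 c3 c4 (r, c)))
    (fun r hr1 hr2 hr3 hr4 => by
      refine Finset.prod_eq_one fun c _ => ?_
      simp [F4, hr1, hr2, hr3, hr4])]
  have e1 : ∀ c, F4 r1 r2 r3 r4 c1 c2 c3 c4 (r1,c) = cnt1 c c1 := fun c => by simp [F4]
  have e2 : ∀ c, F4 r1 r2 r3 r4 c1 c2 c3 c4 (r2,c) = cnt1 c c2 := fun c => by
    simp [F4, h12.symm]
  have e3 : ∀ c, F4 r1 r2 r3 r4 c1 c2 c3 c4 (r3,c) = cnt1 c c3 := fun c => by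
    simp [F4, h13.symm, h23.symm]
  have e4 : ∀ c, F4 r1 r2 r3 r4 c1 c2 c3 c4 (r4,c) = cnt1 c c4 := fun c => by
    simp [F4, h14.symm, h24.symm, h34.symm]
  simp only [e1, e2, e3, e4, prod_pow_single]

lemma key4_int (r1 r2 r3 r4 : Fin m)
    (h12 : r1 ≠ r2) (h13 : r1 ≠ r3) (h14 : r1 ≠ r4) (h23 : r2 ≠ r3) (h24 : r2 ≠ r4)
    (h34 : r3 ≠ r4) (c1 c2 c3 c4 : Fin n) :
    Integrable (fun ω : (Fin m × Fin n) → ℝ =>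
      ω (r1,c1) * ω (r2,c2) * ω (r3,c3) * ω (r4,c4)) (gpi m n) := by
  have := pi_integrable (fun q (x : ℝ) => x ^ (F4 r1 r2 r3 r4 c1 c2 c3 c4 q))
    (fun q => integrable_pow_gaussian _ (F4_le _ _ _ _ _ _ _ _ q))
  exact this.congr (Filter.Eventually.of_forall fun ω =>
    (repr4 r1 r2 r3 r4 h12 h13 h14 h23 h24 h34 c1 c2 c3 c4 ω).symm)

lemma key4_val (r1 r2 r3 r4 : Fin m)
    (h12 : r1 ≠ r2) (h13 : r1 ≠ r3) (h14 : r1 ≠ r4) (h23 : r2 ≠ r3) (h24 : r2 ≠ r4)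
    (h34 : r3 ≠ r4) (c1 c2 c3 c4 : Fin n) :
    ∫ ω : (Fin m × Fin n) → ℝ,
      ω (r1,c1) * ω (r2,c2) * ω (r3,c3) * ω (r4,c4) ∂(gpi m n) = 0 := by
  simp only [repr4 r1 r2 r3 r4 h12 h13 h14 h23 h24 h34 c1 c2 c3 c4]
  rw [pi_integral (fun q (x : ℝ) => x ^ (F4 r1 r2 r3 r4 c1 c2 c3 c4 q))]
  have : ∀ q, (∫ x : ℝ, x ^ (F4 r1 r2 r3 r4 c1 c2 c3 c4 q) ∂(gaussianReal 0 1))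
      = gm (F4 r1 r2 r3 r4 c1 c2 c3 c4 q) := fun q => rfl
  simp only [this]
  rw [Fintype.prod_prod_type]
  refine Finset.prod_eq_zero (Finset.mem_univ r1) ?_
  have e1 : ∀ c, F4 r1 r2 r3 r4 c1 c2 c3 c4 (r1,c) = cnt1 c c1 := fun c => by simp [F4]
  simp only [e1]
  exact rowfactor1 c1

end key


noncomputable def Sfun {m n : ℕ} (a b : Fin m) (ω : (Fin m × Fin n) → ℝ) : ℝ :=
  ∑ t, ω (a,t) * ω (b,t)

section slayer
variable {m n : ℕ}

lemma Sfun_comm (a b : Fin m) : (Sfun a b : ((Fin m × Fin n) → ℝ) → ℝ) = Sfun b a := by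
  funext ω; unfold Sfun; exact Finset.sum_congr rfl fun t _ => mul_comm _ _

lemma S_mul_S (p q r w : Fin m) (ω : (Fin m × Fin n) → ℝ) :
    Sfun p q ω * Sfun r w ω = ∑ s, ∑ t, (ω (p,s) * ω (q,s)) * (ω (r,t) * ω (w,t)) := by
  unfold Sfun; rw [Finset.sum_mul_sum]

lemma S4 (p q r w p' q' r' w' : Fin m) (ω : (Fin m × Fin n) → ℝ) :
    (Sfun p q ω * Sfun r w ω) * (Sfun p' q' ω * Sfun r' w' ω)
      = ∑ s, ∑ u, ∑ t, ∑ v,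
          ((ω (p,s) * ω (q,s)) * (ω (r,t) * ω (w,t)))
            * ((ω (p',u) * ω (q',u)) * (ω (r',v) * ω (w',v))) := by
  rw [S_mul_S p q r w, S_mul_S p' q' r' w', Finset.sum_mul_sum]
  exact Finset.sum_congr rfl fun s _ => Finset.sum_congr rfl fun u _ => Finset.sum_mul_sum _ _ _ _

lemma integrable_quad_sum {Ω : Type*} [MeasurableSpace Ω] {μ : Measure Ω}
    (F : Fin n → Fin n → Fin n → Fin n → Ω → ℝ)
    (hF : ∀ s u t v, Integrable (F s u t v) μ) :
    Integrable (fun ω => ∑ s, ∑ u, ∑ t, ∑ v, F s u t v ω) μ :=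
  integrable_finset_sum _ fun s _ => integrable_finset_sum _ fun u _ =>
    integrable_finset_sum _ fun t _ => integrable_finset_sum _ fun v _ => hF s u t v

lemma integral_quad_sum {Ω : Type*} [MeasurableSpace Ω] {μ : Measure Ω}
    (F : Fin n → Fin n → Fin n → Fin n → Ω → ℝ)
    (hF : ∀ s u t v, Integrable (F s u t v) μ) :
    ∫ ω, (∑ s, ∑ u, ∑ t, ∑ v, F s u t v ω) ∂μ
      = ∑ s, ∑ u, ∑ t, ∑ v, ∫ ω, F s u t v ω ∂μ := by
  rw [integral_finset_sum _ fun s _ => integrable_finset_sum _ fun u _ =>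
    integrable_finset_sum _ fun t _ => integrable_finset_sum _ fun v _ => hF s u t v]
  refine Finset.sum_congr rfl fun s _ => ?_
  rw [integral_finset_sum _ fun u _ =>
    integrable_finset_sum _ fun t _ => integrable_finset_sum _ fun v _ => hF s u t v]
  refine Finset.sum_congr rfl fun u _ => ?_
  rw [integral_finset_sum _ fun t _ => integrable_finset_sum _ fun v _ => hF s u t v]
  refine Finset.sum_congr rfl fun t _ => ?_
  rw [integral_finset_sum _ fun v _ => hF s u t v]

end slayer

section main
variable {m n : ℕ}

lemma mean_int (p q r w : Fin m)
    (hpq : p ≠ q) (hpr : p ≠ r) (hpw : p ≠ w) (hqr : q ≠ r) (hqw : q ≠ w) (hrw : r ≠ w) :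
    Integrable (fun ω : (Fin m × Fin n) → ℝ => Sfun p q ω * Sfun r w ω) (gpi m n) := by
  have h : ∀ s t : Fin n, Integrable (fun ω : (Fin m × Fin n) → ℝ =>
      (ω (p,s) * ω (q,s)) * (ω (r,t) * ω (w,t))) (gpi m n) := fun s t =>
    (key4_int p q r w hpq hpr hpw hqr hqw hrw s s t t).congr
      (Filter.Eventually.of_forall fun ω => by ring)
  have : Integrable (fun ω : (Fin m × Fin n) → ℝ =>
      ∑ s, ∑ t, (ω (p,s) * ω (q,s)) * (ω (r,t) * ω (w,t))) (gpi m n) :=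
    integrable_finset_sum _ fun s _ => integrable_finset_sum _ fun t _ => h s t
  exact this.congr (Filter.Eventually.of_forall fun ω => (S_mul_S p q r w ω).symm)

lemma mean_val (p q r w : Fin m)
    (hpq : p ≠ q) (hpr : p ≠ r) (hpw : p ≠ w) (hqr : q ≠ r) (hqw : q ≠ w) (hrw : r ≠ w) :
    ∫ ω, Sfun p q ω * Sfun r w ω ∂(gpi m n) = 0 := by
  simp only [S_mul_S p q r w]
  rw [integral_finset_sum _ fun s _ => integrable_finset_sum _ fun t _ =>
    (key4_int p q r w hpq hpr hpw hqr hqw hrw s s t t).congr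
      (Filter.Eventually.of_forall fun ω => by ring)]
  refine Finset.sum_eq_zero fun s _ => ?_
  rw [integral_finset_sum _ fun t _ =>
    (key4_int p q r w hpq hpr hpw hqr hqw hrw s s t t).congr
      (Filter.Eventually.of_forall fun ω => by ring)]
  refine Finset.sum_eq_zero fun t _ => ?_
  rw [show (fun ω : (Fin m × Fin n) → ℝ => (ω (p,s) * ω (q,s)) * (ω (r,t) * ω (w,t)))
    = fun ω => ω (p,s) * ω (q,s) * ω (r,t) * ω (w,t) from funext fun ω => by ring]
  exact key4_val p q r w hpq hpr hpw hqr hqw hrw s s t t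

lemma aligned_int (p q r w : Fin m)
    (hpq : p ≠ q) (hpr : p ≠ r) (hpw : p ≠ w) (hqr : q ≠ r) (hqw : q ≠ w) (hrw : r ≠ w) :
    Integrable (fun ω : (Fin m × Fin n) → ℝ =>
      (Sfun p q ω * Sfun r w ω) * (Sfun p q ω * Sfun r w ω)) (gpi m n) := by
  have h : ∀ s u t v : Fin n, Integrable (fun ω : (Fin m × Fin n) → ℝ =>
      ((ω (p,s) * ω (q,s)) * (ω (r,t) * ω (w,t)))
        * ((ω (p,u) * ω (q,u)) * (ω (r,v) * ω (w,v)))) (gpi m n) := fun s u t v =>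
    (key8_int p q r w hpq hpr hpw hqr hqw hrw s u s u t v t v).congr
      (Filter.Eventually.of_forall fun ω => by ring)
  exact (integrable_quad_sum _ h).congr
    (Filter.Eventually.of_forall fun ω => (S4 p q r w p q r w ω).symm)

lemma aligned_val (p q r w : Fin m)
    (hpq : p ≠ q) (hpr : p ≠ r) (hpw : p ≠ w) (hqr : q ≠ r) (hqw : q ≠ w) (hrw : r ≠ w) :
    ∫ ω, (Sfun p q ω * Sfun r w ω) * (Sfun p q ω * Sfun r w ω) ∂(gpi m n)
      = (n : ℝ) * n := by
  simp only [S4 p q r w p q r w]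
  rw [integral_quad_sum _ (fun s u t v =>
    (key8_int p q r w hpq hpr hpw hqr hqw hrw s u s u t v t v).congr
      (Filter.Eventually.of_forall fun ω => by ring))]
  have hv : ∀ s u t v : Fin n, (∫ ω, ((ω (p,s) * ω (q,s)) * (ω (r,t) * ω (w,t)))
        * ((ω (p,u) * ω (q,u)) * (ω (r,v) * ω (w,v))) ∂(gpi m n))
      = (if s = u then (1:ℝ) else 0) * (if s = u then 1 else 0) * (if t = v then 1 else 0)
        * (if t = v then 1 else 0) := by
    intro s u t v
    rw [show (fun ω : (Fin m × Fin n) → ℝ => ((ω (p,s) * ω (q,s)) * (ω (r,t) * ω (w,t)))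
        * ((ω (p,u) * ω (q,u)) * (ω (r,v) * ω (w,v))))
      = fun ω => (ω (p,s) * ω (p,u)) * (ω (q,s) * ω (q,u)) * (ω (r,t) * ω (r,v))
        * (ω (w,t) * ω (w,v)) from funext fun ω => by ring]
    exact key8_val p q r w hpq hpr hpw hqr hqw hrw s u s u t v t v
  simp only [hv]
  simp [Finset.sum_ite_eq, ite_and, Finset.mul_sum, Finset.sum_mul, mul_ite, ite_mul]

lemma cross_int (p q r w : Fin m)
    (hpq : p ≠ q) (hpr : p ≠ r) (hpw : p ≠ w) (hqr : q ≠ r) (hqw : q ≠ w) (hrw : r ≠ w) :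
    Integrable (fun ω : (Fin m × Fin n) → ℝ =>
      (Sfun p q ω * Sfun r w ω) * (Sfun p r ω * Sfun q w ω)) (gpi m n) := by
  have h : ∀ s u t v : Fin n, Integrable (fun ω : (Fin m × Fin n) → ℝ =>
      ((ω (p,s) * ω (q,s)) * (ω (r,t) * ω (w,t)))
        * ((ω (p,u) * ω (r,u)) * (ω (q,v) * ω (w,v)))) (gpi m n) := fun s u t v =>
    (key8_int p q r w hpq hpr hpw hqr hqw hrw s u s v t u t v).congr
      (Filter.Eventually.of_forall fun ω => by ring)
  exact (integrable_quad_sum _ h).congr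
    (Filter.Eventually.of_forall fun ω => (S4 p q r w p r q w ω).symm)

lemma cross_val (p q r w : Fin m)
    (hpq : p ≠ q) (hpr : p ≠ r) (hpw : p ≠ w) (hqr : q ≠ r) (hqw : q ≠ w) (hrw : r ≠ w) :
    ∫ ω, (Sfun p q ω * Sfun r w ω) * (Sfun p r ω * Sfun q w ω) ∂(gpi m n) = (n : ℝ) := by
  simp only [S4 p q r w p r q w]
  rw [integral_quad_sum _ (fun s u t v =>
    (key8_int p q r w hpq hpr hpw hqr hqw hrw s u s v t u t v).congr
      (Filter.Eventually.of_forall fun ω => by ring))]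
  have hv : ∀ s u t v : Fin n, (∫ ω, ((ω (p,s) * ω (q,s)) * (ω (r,t) * ω (w,t)))
        * ((ω (p,u) * ω (r,u)) * (ω (q,v) * ω (w,v))) ∂(gpi m n))
      = (if s = u then (1:ℝ) else 0) * (if s = v then 1 else 0) * (if t = u then 1 else 0)
        * (if t = v then 1 else 0) := by
    intro s u t v
    rw [show (fun ω : (Fin m × Fin n) → ℝ => ((ω (p,s) * ω (q,s)) * (ω (r,t) * ω (w,t)))
        * ((ω (p,u) * ω (r,u)) * (ω (q,v) * ω (w,v))))
      = fun ω => (ω (p,s) * ω (p,u)) * (ω (q,s) * ω (q,v)) * (ω (r,t) * ω (r,u))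
        * (ω (w,t) * ω (w,v)) from funext fun ω => by ring]
    exact key8_val p q r w hpq hpr hpw hqr hqw hrw s u s v t u t v
  simp only [hv]
  simp [Finset.sum_ite_eq, ite_and, Finset.mul_sum, Finset.sum_mul, mul_ite, ite_mul]

end main


end WishartAux

/-- Covariance structure of the three tetrads of a standard Wishart matrix `W = XXᵀ` in
the block indexed by the symmetric difference `{i,j,k,l}` with `i < j < k < l`:
`Var(det W_{{i,j},{k,l}}) = Var(det W_{{i,k},{j,l}}) = Var(det W_{{i,l},{j,k}}) = 2n(n−1)`,
`Cov(det W_{{i,j},{k,l}}, det W_{{i,k},{j,l}}) = n(n−1)`,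
`Cov(det W_{{i,j},{k,l}}, det W_{{i,l},{j,k}}) = −n(n−1)`, and
`Cov(det W_{{i,k},{j,l}}, det W_{{i,l},{j,k}}) = n(n−1)`. -/
theorem cov_tetrads_wishart
    {m n : ℕ} (hm : 4 ≤ m) (hn : 4 ≤ n)
    (X : ((Fin m × Fin n) → ℝ) → Matrix (Fin m) (Fin n) ℝ)
    (hX : ∀ ω, X ω = Matrix.of fun i t => ω (i, t))
    (W : ((Fin m × Fin n) → ℝ) → Matrix (Fin m) (Fin m) ℝ)
    (hW : ∀ ω, W ω = X ω * (X ω)ᵀ)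
    (i j k l : Fin m) (hij : i < j) (hjk : j < k) (hkl : k < l) :
    covar (stdGaussianMatrixMeasure m n)
        (fun ω => sminor (W ω) i j k l) (fun ω => sminor (W ω) i j k l) =
      2 * (n : ℝ) * ((n : ℝ) - 1) ∧
    covar (stdGaussianMatrixMeasure m n)
        (fun ω => sminor (W ω) i k j l) (fun ω => sminor (W ω) i k j l) =
      2 * (n : ℝ) * ((n : ℝ) - 1) ∧
    covar (stdGaussianMatrixMeasure m n)
        (fun ω => sminor (W ω) i l j k) (fun ω => sminor (W ω) i l j k) =
      2 * (n : ℝ) * ((n : ℝ) - 1) ∧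
    covar (stdGaussianMatrixMeasure m n)
        (fun ω => sminor (W ω) i j k l) (fun ω => sminor (W ω) i k j l) =
      (n : ℝ) * ((n : ℝ) - 1) ∧
    covar (stdGaussianMatrixMeasure m n)
        (fun ω => sminor (W ω) i j k l) (fun ω => sminor (W ω) i l j k) =
      -((n : ℝ) * ((n : ℝ) - 1)) ∧
    covar (stdGaussianMatrixMeasure m n)
        (fun ω => sminor (W ω) i k j l) (fun ω => sminor (W ω) i l j k) =
      (n : ℝ) * ((n : ℝ) - 1) := by
  -- distinctness
  have hik : i < k := hij.trans hjk
  have hjl : j < l := hjk.trans hkl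
  have hil : i < l := hik.trans hkl
  have nij : i ≠ j := ne_of_lt hij
  have nik : i ≠ k := ne_of_lt hik
  have nil : i ≠ l := ne_of_lt hil
  have njk : j ≠ k := ne_of_lt hjk
  have njl : j ≠ l := ne_of_lt hjl
  have nkl : k ≠ l := ne_of_lt hkl
  -- W entries are Sfun
  have hWS : ∀ (ω : (Fin m × Fin n) → ℝ) (a b : Fin m), W ω a b = Sfun a b ω := by
    intro ω a b
    rw [hW, hX]
    simp [Matrix.mul_apply, Sfun]
  -- the three tetrads
  have hD1 : (fun ω : (Fin m × Fin n) → ℝ => sminor (W ω) i j k l)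
      = fun ω => Sfun i k ω * Sfun j l ω - Sfun i l ω * Sfun j k ω := by
    funext ω
    rw [sminor, min_eq_left hij.le, max_eq_right hij.le, min_eq_left hkl.le,
      max_eq_right hkl.le, hWS, hWS, hWS, hWS]
  have hD2 : (fun ω : (Fin m × Fin n) → ℝ => sminor (W ω) i k j l)
      = fun ω => Sfun i j ω * Sfun k l ω - Sfun i l ω * Sfun j k ω := by
    funext ω
    rw [sminor, min_eq_left hik.le, max_eq_right hik.le, min_eq_left hjl.le,
      max_eq_right hjl.le, hWS, hWS, hWS, hWS]
    rw [show (Sfun k j : ((Fin m × Fin n) → ℝ) → ℝ) = Sfun j k from Sfun_comm k j]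
  have hD3 : (fun ω : (Fin m × Fin n) → ℝ => sminor (W ω) i l j k)
      = fun ω => Sfun i j ω * Sfun k l ω - Sfun i k ω * Sfun j l ω := by
    funext ω
    rw [sminor, min_eq_left hil.le, max_eq_right hil.le, min_eq_left hjk.le,
      max_eq_right hjk.le, hWS, hWS, hWS, hWS]
    rw [show (Sfun l k : ((Fin m × Fin n) → ℝ) → ℝ) = Sfun k l from Sfun_comm l k,
        show (Sfun l j : ((Fin m × Fin n) → ℝ) → ℝ) = Sfun j l from Sfun_comm l j]
  have hμ : stdGaussianMatrixMeasure m n = gpi m n := rfl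
  -- abbreviations
  set f1 : ((Fin m × Fin n) → ℝ) → ℝ := fun ω => Sfun i k ω * Sfun j l ω with hf1
  set f2 : ((Fin m × Fin n) → ℝ) → ℝ := fun ω => Sfun i l ω * Sfun j k ω with hf2
  set f3 : ((Fin m × Fin n) → ℝ) → ℝ := fun ω => Sfun i j ω * Sfun k l ω with hf3
  -- integrability of f's
  have I1 : Integrable f1 (gpi m n) := mean_int i k j l nik nij nil njk.symm nkl njl
  have I2 : Integrable f2 (gpi m n) := mean_int i l j k nil nij nik njl.symm nkl.symm njk
  have I3 : Integrable f3 (gpi m n) := mean_int i j k l nij nik nil njk njl nkl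
  -- means
  have M1 : ∫ ω, f1 ω ∂(gpi m n) = 0 := mean_val i k j l nik nij nil njk.symm nkl njl
  have M2 : ∫ ω, f2 ω ∂(gpi m n) = 0 := mean_val i l j k nil nij nik njl.symm nkl.symm njk
  have M3 : ∫ ω, f3 ω ∂(gpi m n) = 0 := mean_val i j k l nij nik nil njk njl nkl
  -- second moments
  have c11 : Integrable (fun ω => f1 ω * f1 ω) (gpi m n) :=
    aligned_int i k j l nik nij nil njk.symm nkl njl
  have v11 : ∫ ω, f1 ω * f1 ω ∂(gpi m n) = (n:ℝ) * n :=
    aligned_val i k j l nik nij nil njk.symm nkl njl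
  have c22 : Integrable (fun ω => f2 ω * f2 ω) (gpi m n) :=
    aligned_int i l j k nil nij nik njl.symm nkl.symm njk
  have v22 : ∫ ω, f2 ω * f2 ω ∂(gpi m n) = (n:ℝ) * n :=
    aligned_val i l j k nil nij nik njl.symm nkl.symm njk
  have c33 : Integrable (fun ω => f3 ω * f3 ω) (gpi m n) :=
    aligned_int i j k l nij nik nil njk njl nkl
  have v33 : ∫ ω, f3 ω * f3 ω ∂(gpi m n) = (n:ℝ) * n :=
    aligned_val i j k l nij nik nil njk njl nkl
  -- cross moments
  -- f1*f2 : (p,q,r,w) = (i,k,l,j)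
  have c12 : Integrable (fun ω => f1 ω * f2 ω) (gpi m n) := by
    have := cross_int (n := n) i k l j nik nil nij nkl njk.symm njl.symm
    rwa [Sfun_comm l j, Sfun_comm k j] at this
  have v12 : ∫ ω, f1 ω * f2 ω ∂(gpi m n) = (n:ℝ) := by
    have := cross_val (n := n) i k l j nik nil nij nkl njk.symm njl.symm
    rwa [Sfun_comm l j, Sfun_comm k j] at this
  -- f1*f3 : (p,q,r,w) = (i,k,j,l)
  have c13 : Integrable (fun ω => f1 ω * f3 ω) (gpi m n) :=
    cross_int i k j l nik nij nil njk.symm nkl njl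
  have v13 : ∫ ω, f1 ω * f3 ω ∂(gpi m n) = (n:ℝ) :=
    cross_val i k j l nik nij nil njk.symm nkl njl
  -- f2*f3 : (p,q,r,w) = (i,l,j,k)
  have c23 : Integrable (fun ω => f2 ω * f3 ω) (gpi m n) := by
    have := cross_int (n := n) i l j k nil nij nik njl.symm nkl.symm njk
    rwa [Sfun_comm l k] at this
  have v23 : ∫ ω, f2 ω * f3 ω ∂(gpi m n) = (n:ℝ) := by
    have := cross_val (n := n) i l j k nil nij nik njl.symm nkl.symm njk
    rwa [Sfun_comm l k] at this
  -- means of the D's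
  have MD1 : ∫ ω, (f1 ω - f2 ω) ∂(gpi m n) = 0 := by
    rw [integral_sub I1 I2, M1, M2, sub_zero]
  have MD2 : ∫ ω, (f3 ω - f2 ω) ∂(gpi m n) = 0 := by
    rw [integral_sub I3 I2, M3, M2, sub_zero]
  have MD3 : ∫ ω, (f3 ω - f1 ω) ∂(gpi m n) = 0 := by
    rw [integral_sub I3 I1, M3, M1, sub_zero]
  -- generic covariance computation
  have cov_eq : ∀ g h : ((Fin m × Fin n) → ℝ) → ℝ,
      (∫ ω, g ω ∂(gpi m n)) = 0 → (∫ ω, h ω ∂(gpi m n)) = 0 →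
      covar (gpi m n) g h = ∫ ω, g ω * h ω ∂(gpi m n) := by
    intro g h hg hh
    rw [covar, hg, hh]
    simp only [sub_zero]
  refine ⟨?_, ?_, ?_, ?_, ?_, ?_⟩
  · rw [hμ, hD1, cov_eq _ _ MD1 MD1]
    have : ∀ ω : (Fin m × Fin n) → ℝ, (f1 ω - f2 ω) * (f1 ω - f2 ω)
        = (f1 ω * f1 ω - f1 ω * f2 ω) - (f1 ω * f2 ω - f2 ω * f2 ω) := fun ω => by ring
    simp only [this]
    have hA : Integrable (fun ω => f1 ω * f1 ω - f1 ω * f2 ω) (gpi m n) := c11.sub c12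
    have hB : Integrable (fun ω => f1 ω * f2 ω - f2 ω * f2 ω) (gpi m n) := c12.sub c22
    rw [integral_sub hA hB, integral_sub c11 c12, integral_sub c12 c22, v11, v12, v22]
    ring
  · rw [hμ, hD2, cov_eq _ _ MD2 MD2]
    have : ∀ ω : (Fin m × Fin n) → ℝ, (f3 ω - f2 ω) * (f3 ω - f2 ω)
        = (f3 ω * f3 ω - f2 ω * f3 ω) - (f2 ω * f3 ω - f2 ω * f2 ω) := fun ω => by ring
    simp only [this]
    have hA : Integrable (fun ω => f3 ω * f3 ω - f2 ω * f3 ω) (gpi m n) := c33.sub c23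
    have hB : Integrable (fun ω => f2 ω * f3 ω - f2 ω * f2 ω) (gpi m n) := c23.sub c22
    rw [integral_sub hA hB, integral_sub c33 c23, integral_sub c23 c22, v33, v23, v22]
    ring
  · rw [hμ, hD3, cov_eq _ _ MD3 MD3]
    have : ∀ ω : (Fin m × Fin n) → ℝ, (f3 ω - f1 ω) * (f3 ω - f1 ω)
        = (f3 ω * f3 ω - f1 ω * f3 ω) - (f1 ω * f3 ω - f1 ω * f1 ω) := fun ω => by ring
    simp only [this]
    have hA : Integrable (fun ω => f3 ω * f3 ω - f1 ω * f3 ω) (gpi m n) := c33.sub c13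
    have hB : Integrable (fun ω => f1 ω * f3 ω - f1 ω * f1 ω) (gpi m n) := c13.sub c11
    rw [integral_sub hA hB, integral_sub c33 c13, integral_sub c13 c11, v33, v13, v11]
    ring
  · rw [hμ, hD1, hD2, cov_eq _ _ MD1 MD2]
    have : ∀ ω : (Fin m × Fin n) → ℝ, (f1 ω - f2 ω) * (f3 ω - f2 ω)
        = (f1 ω * f3 ω - f1 ω * f2 ω) - (f2 ω * f3 ω - f2 ω * f2 ω) := fun ω => by ring
    simp only [this]
    have hA : Integrable (fun ω => f1 ω * f3 ω - f1 ω * f2 ω) (gpi m n) := c13.sub c12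
    have hB : Integrable (fun ω => f2 ω * f3 ω - f2 ω * f2 ω) (gpi m n) := c23.sub c22
    rw [integral_sub hA hB, integral_sub c13 c12, integral_sub c23 c22, v13, v12, v23, v22]
    ring
  · rw [hμ, hD1, hD3, cov_eq _ _ MD1 MD3]
    have : ∀ ω : (Fin m × Fin n) → ℝ, (f1 ω - f2 ω) * (f3 ω - f1 ω)
        = (f1 ω * f3 ω - f1 ω * f1 ω) - (f2 ω * f3 ω - f1 ω * f2 ω) := fun ω => by ring
    simp only [this]
    have hA : Integrable (fun ω => f1 ω * f3 ω - f1 ω * f1 ω) (gpi m n) := c13.sub c11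
    have hB : Integrable (fun ω => f2 ω * f3 ω - f1 ω * f2 ω) (gpi m n) := c23.sub c12
    rw [integral_sub hA hB, integral_sub c13 c11, integral_sub c23 c12, v13, v11, v23, v12]
    ring
  · rw [hμ, hD2, hD3, cov_eq _ _ MD2 MD3]
    have : ∀ ω : (Fin m × Fin n) → ℝ, (f3 ω - f2 ω) * (f3 ω - f1 ω)
        = (f3 ω * f3 ω - f1 ω * f3 ω) - (f2 ω * f3 ω - f1 ω * f2 ω) := fun ω => by ring
    simp only [this]
    have hA : Integrable (fun ω => f3 ω * f3 ω - f1 ω * f3 ω) (gpi m n) := c33.sub c13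
    have hB : Integrable (fun ω => f2 ω * f3 ω - f1 ω * f2 ω) (gpi m n) := c23.sub c12
    rw [integral_sub hA hB, integral_sub c33 c13, integral_sub c23 c12, v33, v13, v23, v12]
    ring
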